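/- Let 0 < ε < 1 and for each natural number n ≥ 2 set Δ(n) = √(2(1−ε)·ln n). Then for every δ > 0 there exists N such that for all n ≥ N: ∏_{j=1}^{⌊Δ(n)⌋} (1 − (Δ(n)−j)/n)ⁿ ≥ (1−δ)·n^(−(1−ε)). -/

import Mathlib

open Finset Filter

private lemma aux_exp (x : ℝ) (h0 : 0 ≤ x) (h2 : x ≤ 1/2) :
    Real.exp (-(x + 2*x^2)) ≤ 1 - x := by
  have hx1 : 0 < 1 - x := by linarith
  have h3 : x / (1-x) ≤ x + 2*x^2 := by
    rw [div_le_iff₀ hx1]; nlinarith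
  have h4 : 1/(1-x) ≤ Real.exp (x/(1-x)) := by
    have h5 := Real.add_one_le_exp (x/(1-x))
    have h6 : x/(1-x) + 1 = 1/(1-x) := by field_simp; ring
    linarith
  calc Real.exp (-(x + 2*x^2)) ≤ Real.exp (-(x/(1-x))) :=
        Real.exp_le_exp.2 (by linarith)
    _ = (Real.exp (x/(1-x)))⁻¹ := by rw [Real.exp_neg]
    _ ≤ (1/(1-x))⁻¹ := inv_anti₀ (by positivity) h4
    _ = 1 - x := by field_simp

private lemma gauss_real (m : ℕ) :
    (∑ j ∈ Finset.Icc 1 m, (j:ℝ)) = m*(m+1)/2 := by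
  induction m with
  | zero => simp
  | succ k ih =>
      rw [Finset.sum_Icc_succ_top (by omega : 1 ≤ k + 1)]
      push_cast
      rw [ih]; ring

private lemma main_ineq (ε δ : ℝ) (hε : 0 < ε) (hε1 : ε < 1) (n : ℕ) (hn4 : 4 ≤ n)
    (hC3 : Real.log n ≤ (n:ℝ)/2)
    (hC4 : 1 ≤ 2*(1-ε) * Real.log n)
    (hC5 : 2 * (2*(1-ε) * Real.log n)^2 / n ≤ δ) :
    (∏ j ∈ Finset.Icc 1 ⌊Real.sqrt (2*(1-ε)*Real.log n)⌋₊,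
        (1 - (Real.sqrt (2*(1-ε)*Real.log n) - j) / n) ^ n) ≥
      (1 - δ) * (n : ℝ) ^ (-(1 - ε)) := by
  have hn0 : (0:ℝ) < n := by positivity
  have hc : (0:ℝ) < 2*(1-ε) := by linarith
  have hL0 : 0 ≤ Real.log n := Real.log_nonneg (by exact_mod_cast (by omega : 1 ≤ n))
  set c : ℝ := 2*(1-ε) with hcdef
  set D : ℝ := Real.sqrt (c * Real.log n) with hDdef
  have hcl0 : 0 ≤ c * Real.log n := by positivity
  have hD0 : 0 ≤ D := Real.sqrt_nonneg _
  have hD2 : D^2 = c * Real.log n := Real.sq_sqrt hcl0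
  have hD1 : 1 ≤ D := by
    rw [hDdef, show (1:ℝ) = Real.sqrt 1 by simp]
    exact Real.sqrt_le_sqrt hC4
  have hDn : D ≤ (n:ℝ)/2 := by
    have h1 : c * Real.log n ≤ (n:ℝ) := by nlinarith
    have h2 : D ≤ Real.sqrt n := Real.sqrt_le_sqrt h1
    have h3 : Real.sqrt (n:ℝ) ≤ (n:ℝ)/2 := by
      have h4 : (n:ℝ) ≤ ((n:ℝ)/2)^2 := by
        nlinarith [show (4:ℝ) ≤ (n:ℝ) by exact_mod_cast hn4]
      calc Real.sqrt (n:ℝ) ≤ Real.sqrt (((n:ℝ)/2)^2) := Real.sqrt_le_sqrt h4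
        _ = (n:ℝ)/2 := Real.sqrt_sq (by positivity)
    linarith
  have hD3 : D^3 ≤ (c * Real.log n)^2 := by
    have hs : D ≤ c * Real.log n := by
      calc D ≤ Real.sqrt ((c * Real.log n)^2) := Real.sqrt_le_sqrt (by nlinarith)
        _ = c * Real.log n := Real.sqrt_sq hcl0
    calc D^3 = D^2 * D := by ring
      _ ≤ (c * Real.log n) * (c * Real.log n) := by
          rw [hD2]; exact mul_le_mul_of_nonneg_left hs (by positivity)
      _ = (c * Real.log n)^2 := by ring
  set m : ℕ := ⌊D⌋₊ with hmdef
  have hmD : (m:ℝ) ≤ D := Nat.floor_le hD0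
  have hjD : ∀ j ∈ Finset.Icc 1 m, (j:ℝ) ≤ D := by
    intro j hj
    have h := (Finset.mem_Icc.mp hj).2
    calc (j:ℝ) ≤ (m:ℝ) := by exact_mod_cast h
      _ ≤ D := hmD
  have hcard : (Finset.Icc 1 m).card = m := by simp
  set S1 : ℝ := ∑ j ∈ Finset.Icc 1 m, (D - (j:ℝ)) with hS1def
  set S2 : ℝ := ∑ j ∈ Finset.Icc 1 m, (D - (j:ℝ))^2 with hS2def
  have hS1 : S1 ≤ D^2/2 := by
    rw [hS1def, Finset.sum_sub_distrib, Finset.sum_const, hcard, gauss_real, nsmul_eq_mul]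
    nlinarith [sq_nonneg (D - m), Nat.cast_nonneg (α := ℝ) m]
  have hS2 : S2 ≤ D^3 := by
    have h1 : ∀ j ∈ Finset.Icc 1 m, (D - (j:ℝ))^2 ≤ D^2 := by
      intro j hj
      have h2 := hjD j hj
      have h3 : (1:ℝ) ≤ (j:ℝ) := by exact_mod_cast (Finset.mem_Icc.mp hj).1
      nlinarith
    calc S2 ≤ (Finset.Icc 1 m).card • D^2 := Finset.sum_le_card_nsmul _ _ _ h1
      _ = (m:ℝ) * D^2 := by rw [hcard, nsmul_eq_mul]
      _ ≤ D * D^2 := mul_le_mul_of_nonneg_right hmD (sq_nonneg D)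
      _ = D^3 := by ring
  have hfac : ∀ j ∈ Finset.Icc 1 m,
      Real.exp ((n:ℝ) * (-((D - (j:ℝ))/n + 2*((D - (j:ℝ))/n)^2))) ≤ (1 - (D - (j:ℝ))/n)^n := by
    intro j hj
    have hx0 : 0 ≤ (D - (j:ℝ))/n := div_nonneg (by linarith [hjD j hj]) hn0.le
    have hx2 : (D - (j:ℝ))/n ≤ 1/2 := by
      have h1 : (1:ℝ) ≤ (j:ℝ) := by exact_mod_cast (Finset.mem_Icc.mp hj).1
      rw [div_le_iff₀ hn0]
      have h5 : (1:ℝ)/2 * n = (n:ℝ)/2 := by ring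
      linarith
    rw [Real.exp_nat_mul]
    exact pow_le_pow_left₀ (Real.exp_nonneg _) (aux_exp _ hx0 hx2) n
  have hprod : ∏ j ∈ Finset.Icc 1 m, Real.exp ((n:ℝ) * (-((D - (j:ℝ))/n + 2*((D - (j:ℝ))/n)^2)))
      ≤ ∏ j ∈ Finset.Icc 1 m, (1 - (D - (j:ℝ))/n)^n :=
    Finset.prod_le_prod (fun j _ => (Real.exp_pos _).le) hfac
  have hsum_eq : ∑ j ∈ Finset.Icc 1 m, (n:ℝ) * (-((D - (j:ℝ))/n + 2*((D - (j:ℝ))/n)^2))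
      = -(S1 + 2*S2/n) := by
    have h1 : ∀ j ∈ Finset.Icc 1 m, (n:ℝ) * (-((D - (j:ℝ))/n + 2*((D - (j:ℝ))/n)^2))
        = -((D - (j:ℝ)) + (2/n)*(D - (j:ℝ))^2) := by
      intro j _; field_simp
    rw [Finset.sum_congr rfl h1]
    rw [show (∑ j ∈ Finset.Icc 1 m, -((D - (j:ℝ)) + (2/n)*(D - (j:ℝ))^2))
        = -(∑ j ∈ Finset.Icc 1 m, ((D - (j:ℝ)) + (2/n)*(D - (j:ℝ))^2)) by
      rw [← Finset.sum_neg_distrib]]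
    rw [Finset.sum_add_distrib, ← Finset.mul_sum, hS1def.symm, hS2def.symm]
    ring
  have hexp1 : Real.exp (-(D^2/2 + 2*D^3/n)) ≤ Real.exp (-(S1 + 2*S2/n)) := by
    apply Real.exp_le_exp.2
    have h7 : 2*S2/n ≤ 2*D^3/n := by gcongr
    linarith
  have hrw : Real.exp (-(D^2/2)) = (n:ℝ)^(-(1-ε)) := by
    rw [Real.rpow_def_of_pos hn0, hD2, hcdef]; ring_nf
  have ht : 2*D^3/n ≤ δ := by
    calc 2*D^3/n ≤ 2*(c*Real.log n)^2/n := by gcongr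
      _ ≤ δ := hC5
  have h1m : 1 - δ ≤ Real.exp (-(2*D^3/n)) := by
    have h6 := Real.add_one_le_exp (-(2*D^3/n))
    linarith
  have hfin : (1-δ) * (n:ℝ)^(-(1-ε)) ≤ Real.exp (-(D^2/2 + 2*D^3/n)) := by
    calc (1-δ) * (n:ℝ)^(-(1-ε)) = Real.exp (-(D^2/2)) * (1-δ) := by rw [hrw]; ring
      _ ≤ Real.exp (-(D^2/2)) * Real.exp (-(2*D^3/n)) :=
          mul_le_mul_of_nonneg_left h1m (Real.exp_nonneg _)
      _ = Real.exp (-(D^2/2 + 2*D^3/n)) := by rw [← Real.exp_add]; ring_nf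
  calc (∏ j ∈ Finset.Icc 1 m, (1 - (D - (j:ℝ))/n)^n)
      ≥ Real.exp (∑ j ∈ Finset.Icc 1 m, (n:ℝ) * (-((D - (j:ℝ))/n + 2*((D - (j:ℝ))/n)^2))) := by
        rw [Real.exp_sum]; exact hprod
    _ = Real.exp (-(S1 + 2*S2/n)) := by rw [hsum_eq]
    _ ≥ Real.exp (-(D^2/2 + 2*D^3/n)) := hexp1
    _ ≥ (1-δ) * (n:ℝ)^(-(1-ε)) := hfin

/-- Third-phase estimate in the lower-bound proof of the hybrid rumor-spreading protocol
(case `R ≥ Δ`): with `Δ(n) = √(2(1-ε)·ln n)`,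
`∏_{j=1}^{⌊Δ(n)⌋} (1 - (Δ(n)-j)/n)ⁿ ≥ (1-δ)·n^(-(1-ε))` for all sufficiently large `n`. -/
theorem stmt5 (ε : ℝ) (hε : 0 < ε) (hε1 : ε < 1)
    (Δ : ℕ → ℝ) (hΔ : ∀ n, 2 ≤ n → Δ n = Real.sqrt (2 * (1 - ε) * Real.log n)) :
    ∀ δ : ℝ, 0 < δ → ∃ N : ℕ, ∀ n, N ≤ n →
      (∏ j ∈ Finset.Icc 1 ⌊Δ n⌋₊, (1 - (Δ n - j) / n) ^ n) ≥
        (1 - δ) * (n : ℝ) ^ (-(1 - ε)) := by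
  intro δ hδ
  have hc : (0:ℝ) < 2*(1-ε) := by linarith
  have hlogn : Tendsto (fun n:ℕ => Real.log n) atTop atTop :=
    Real.tendsto_log_atTop.comp tendsto_natCast_atTop_atTop
  have hdiv1 : Tendsto (fun n:ℕ => Real.log n / n) atTop (nhds 0) := by
    have h := (Real.tendsto_pow_log_div_mul_add_atTop 1 0 1 one_ne_zero).comp
      (tendsto_natCast_atTop_atTop (R := ℝ))
    simpa [Function.comp_def] using h
  have hdiv2 : Tendsto (fun n:ℕ => 2*(2*(1-ε)*Real.log n)^2 / n) atTop (nhds 0) := by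
    have h := ((Real.tendsto_pow_log_div_mul_add_atTop 1 0 2 one_ne_zero).comp
      (tendsto_natCast_atTop_atTop (R := ℝ))).const_mul (2*(2*(1-ε))^2)
    rw [mul_zero] at h
    refine h.congr (fun n => ?_)
    show 2*(2*(1-ε))^2 * (Real.log n ^ 2 / (1 * (n:ℝ) + 0)) = _
    ring
  have E1 : ∀ᶠ n : ℕ in atTop, 4 ≤ n := eventually_ge_atTop 4
  have E2 : ∀ᶠ n : ℕ in atTop, Real.log n ≤ (n:ℝ)/2 := by
    filter_upwards [hdiv1.eventually (eventually_le_nhds (by norm_num : (0:ℝ) < 1/2)),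
      eventually_ge_atTop 1] with n h1 h2
    have hn0 : (0:ℝ) < n := by exact_mod_cast h2
    rw [div_le_iff₀ hn0] at h1
    nlinarith
  have E3 : ∀ᶠ n : ℕ in atTop, 1 ≤ 2*(1-ε)*Real.log n := by
    filter_upwards [hlogn.eventually_ge_atTop (1/(2*(1-ε)))] with n h1
    have h2 := (div_le_iff₀ hc).mp h1
    nlinarith
  have E4 : ∀ᶠ n : ℕ in atTop, 2*(2*(1-ε)*Real.log n)^2/n ≤ δ :=
    hdiv2.eventually (eventually_le_nhds hδ)
  rcases eventually_atTop.mp (((E1.and E2).and E3).and E4) with ⟨N, hN⟩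
  refine ⟨N, fun n hn => ?_⟩
  obtain ⟨⟨⟨h1, h2⟩, h3⟩, h4⟩ := hN n hn
  rw [hΔ n (by omega)]
  exact main_ineq ε δ hε hε1 n h1 h2 h3 h4
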